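/- A Banach lattice E is a KB-space (every increasing norm-bounded sequence in E⁺ is norm convergent) if and only if every increasing norm-bounded net in E⁺ is norm convergent. -/

import Mathlib

open Filter Topology

/-- **KB-spaces via nets.** A Banach lattice `E` is a KB-space (every increasing
norm-bounded sequence of positive elements is norm convergent) if and only if every
increasing norm-bounded net of positive elements is norm convergent. -/
theorem kbSpace_iff_nets {E : Type u} [NormedAddCommGroup E] [Lattice E] [HasSolidNorm E]
    [IsOrderedAddMonoid E] [CompleteSpace E] :
    (∀ x : ℕ → E, (∀ n, 0 ≤ x n) → Monotone x → (∃ C : ℝ, ∀ n, ‖x n‖ ≤ C) →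
      ∃ l : E, Tendsto x atTop (𝓝 l)) ↔
    (∀ (J : Type u) [Preorder J] [Nonempty J] [IsDirected J (· ≤ ·)],
      ∀ x : J → E, (∀ j, 0 ≤ x j) → Monotone x → (∃ C : ℝ, ∀ j, ‖x j‖ ≤ C) →
        ∃ l : E, Tendsto x atTop (𝓝 l)) := by
  constructor
  · intro h J _ _ _ x hpos hmono hbd
    obtain ⟨C, hC⟩ := hbd
    -- key step: for each ε > 0, there is j0 such that ‖x j - x j0‖ < ε for j ≥ j0
    have key : ∀ ε : ℝ, 0 < ε → ∃ j0 : J, ∀ j, j0 ≤ j → ‖x j - x j0‖ < ε := by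
      by_contra hcon
      push_neg at hcon
      obtain ⟨ε, hε, hbad⟩ := hcon
      choose f hf1 hf2 using hbad
      let j : ℕ → J := fun n => f^[n] (Classical.arbitrary J)
      have hjsucc : ∀ n, j (n + 1) = f (j n) := by
        intro n
        simp only [j, Function.iterate_succ_apply']
      have hjmono : Monotone j := by
        apply monotone_nat_of_le_succ
        intro n
        rw [hjsucc]
        exact hf1 _
      obtain ⟨l, hl⟩ := h (x ∘ j) (fun n => hpos _) (hmono.comp hjmono)
        ⟨C, fun n => hC _⟩
      have hl' : Tendsto (fun n => x (j (n + 1)) - x (j n)) atTop (𝓝 (l - l)) :=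
        (hl.comp (tendsto_add_atTop_nat 1)).sub hl
      rw [sub_self] at hl'
      have := (hl'.norm.eventually (by simpa using eventually_lt_nhds hε)).exists
      obtain ⟨n, hn⟩ := this
      have : ε ≤ ‖x (j (n + 1)) - x (j n)‖ := by
        rw [hjsucc]; exact hf2 _
      linarith
    -- the net is Cauchy
    have hcauchy : Cauchy (map x atTop) := by
      refine Metric.cauchy_iff.2 ⟨map_neBot, fun ε hε => ?_⟩
      obtain ⟨j0, hj0⟩ := key (ε / 2) (by linarith)
      refine ⟨x '' Set.Ici j0, image_mem_map (Ici_mem_atTop j0), ?_⟩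
      rintro a ⟨i, hi, rfl⟩ b ⟨k, hk, rfl⟩
      calc dist (x i) (x k) ≤ dist (x i) (x j0) + dist (x j0) (x k) := dist_triangle _ _ _
        _ < ε / 2 + ε / 2 := by
            rw [dist_eq_norm, dist_eq_norm]
            have h1 := hj0 i hi
            have h2 := hj0 k hk
            rw [norm_sub_rev (x j0)]
            linarith
        _ = ε := by ring
    obtain ⟨l, hl⟩ := CompleteSpace.complete hcauchy
    exact ⟨l, hl⟩
  · intro h x hpos hmono hbd
    obtain ⟨l, hl⟩ := h (ULift ℕ) (fun u => x u.down) (fun u => hpos _)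
      (fun a b hab => hmono hab) (hbd.imp fun C hC u => hC _)
    refine ⟨l, ?_⟩
    have hup : Tendsto (ULift.up : ℕ → ULift ℕ) atTop atTop :=
      tendsto_atTop_atTop.2 fun b => ⟨b.down, fun a ha => ha⟩
    exact hl.comp hup
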